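/- Let H ∈ ℝ^{d×d} be symmetric positive definite, b ∈ ℝ^d, and v ∈ ℝ^d with ‖v‖_{H^{-1}} ≤ ε‖b‖_{H^{-1}} for 0 ≤ ε ≤ 1/80. Let y = H^{-1}(b + v). Then there exists a symmetric matrix Δ ∈ ℝ^{d×d} such that y = (H + Δ)^{-1} b and e^{-20ε} H ⪯ H + Δ ⪯ e^{20ε} H. -/

import Mathlib

open Matrix

set_option maxHeartbeats 1000000

lemma aux_vecMulVec_mulVec {d : ℕ} (a c x : Fin d → ℝ) :
    vecMulVec a c *ᵥ x = (c ⬝ᵥ x) • a := by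
  funext i
  simp only [mulVec, vecMulVec_apply, dotProduct, Pi.smul_apply, smul_eq_mul]
  rw [Finset.sum_mul]
  exact Finset.sum_congr rfl (fun j _ => by ring)

lemma aux_symm_swap {d : ℕ} (A : Matrix (Fin d) (Fin d) ℝ) (hA : Aᵀ = A) (x y : Fin d → ℝ) :
    x ⬝ᵥ A *ᵥ y = y ⬝ᵥ A *ᵥ x := by
  rw [dotProduct_mulVec, ← mulVec_transpose, hA, dotProduct_comm]

lemma aux_CS {d : ℕ} (A : Matrix (Fin d) (Fin d) ℝ) (hA : A.PosSemidef) (x y : Fin d → ℝ) :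
    (x ⬝ᵥ A *ᵥ y)^2 ≤ (x ⬝ᵥ A *ᵥ x) * (y ⬝ᵥ A *ᵥ y) := by
  have hAs : Aᵀ = A := by
    have := hA.1
    rwa [Matrix.IsHermitian, conjTranspose_eq_transpose_of_trivial] at this
  have key : ∀ t : ℝ, 0 ≤ (x ⬝ᵥ A *ᵥ x) * (t * t) + (2 * (x ⬝ᵥ A *ᵥ y)) * t + (y ⬝ᵥ A *ᵥ y) := by
    intro t
    have h0 := hA.dotProduct_mulVec_nonneg (t • x + y)
    simp only [star_trivial, mulVec_add, mulVec_smul, dotProduct_add, add_dotProduct,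
      dotProduct_smul, smul_dotProduct, smul_eq_mul] at h0
    have hsw := aux_symm_swap A hAs x y
    rw [← hsw] at h0
    ring_nf at h0 ⊢
    linarith
  have hd := discrim_le_zero key
  rw [discrim] at hd
  nlinarith [hd]

lemma aux_psd_smul {d : ℕ} (H : Matrix (Fin d) (Fin d) ℝ) (hH : H.PosSemidef) {a : ℝ}
    (ha : 0 ≤ a) : (a • H).PosSemidef := by
  refine PosSemidef.of_dotProduct_mulVec_nonneg ?_ (fun x => ?_)
  · rw [Matrix.IsHermitian, conjTranspose_smul, star_trivial, hH.1]
  · rw [star_trivial, smul_mulVec, dotProduct_smul, smul_eq_mul]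
    exact mul_nonneg ha (hH.dotProduct_mulVec_nonneg x)

lemma aux_pd_smul {d : ℕ} (H : Matrix (Fin d) (Fin d) ℝ) (hH : H.PosDef) {a : ℝ}
    (ha : 0 < a) : (a • H).PosDef := by
  refine PosDef.of_dotProduct_mulVec_pos ?_ (fun x hx => ?_)
  · rw [Matrix.IsHermitian, conjTranspose_smul, star_trivial, hH.1]
  · rw [star_trivial, smul_mulVec, dotProduct_smul, smul_eq_mul]
    exact mul_pos ha (hH.dotProduct_mulVec_pos hx)

lemma aux_scalar (P Q c s t ν ε : ℝ) (hP : 0 ≤ P) (hQ : 0 < Q) (hν : 0 ≤ ν) (hε : 0 < ε)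
    (hε1 : ε ≤ 1/80) (hs : s^2 ≤ P*Q) (ht : t^2 ≤ P*ν) (hc : c^2 ≤ ν*Q) (hνQ : ν ≤ 2*ε^2*Q) :
    |c*s^2 - 2*Q*(t*s)| ≤ 5*ε*P*Q^2 := by
  have hc2 : c^2 ≤ 2*ε^2*Q^2 := by nlinarith
  have h1 : c*s^2 ≤ (3/2)*ε*P*Q^2 ∧ -(c*s^2) ≤ (3/2)*ε*P*Q^2 := by
    constructor
    · have e1 : 2*ε*Q*(c*s^2) ≤ 3*ε^2*Q^2*s^2 := by
        nlinarith [mul_nonneg (sq_nonneg (c - ε*Q)) (sq_nonneg s)]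
      have e2 : 3*ε^2*Q^2*s^2 ≤ 3*ε^2*Q^2*(P*Q) := by nlinarith [sq_nonneg ε]
      have := mul_pos (mul_pos (mul_pos two_pos hε) hQ) hQ
      nlinarith
    · have e1 : 2*ε*Q*(-(c*s^2)) ≤ 3*ε^2*Q^2*s^2 := by
        nlinarith [mul_nonneg (sq_nonneg (c + ε*Q)) (sq_nonneg s)]
      have e2 : 3*ε^2*Q^2*s^2 ≤ 3*ε^2*Q^2*(P*Q) := by nlinarith [sq_nonneg ε]
      have := mul_pos (mul_pos (mul_pos two_pos hε) hQ) hQ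
      nlinarith
  have h2 : 2*Q*(t*s) ≤ 3*ε*P*Q^2 ∧ -(2*Q*(t*s)) ≤ 3*ε*P*Q^2 := by
    constructor
    · have e1 : ε*(2*Q*(t*s)) ≤ Q*t^2 + ε^2*Q*s^2 := by
        nlinarith [mul_nonneg hQ.le (sq_nonneg (t - ε*s))]
      have e2 : Q*t^2 + ε^2*Q*s^2 ≤ Q*(P*ν) + ε^2*Q*(P*Q) := by
        nlinarith [sq_nonneg ε, mul_pos hQ hQ]
      have e3 : Q*(P*ν) ≤ Q*(P*(2*ε^2*Q)) := by nlinarith [mul_nonneg hQ.le hP]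
      have h4 : ε*(3*ε*P*Q^2) = 3*ε^2*Q*(P*Q) := by ring
      nlinarith [hε]
    · have e1 : ε*(-(2*Q*(t*s))) ≤ Q*t^2 + ε^2*Q*s^2 := by
        nlinarith [mul_nonneg hQ.le (sq_nonneg (t + ε*s))]
      have e2 : Q*t^2 + ε^2*Q*s^2 ≤ Q*(P*ν) + ε^2*Q*(P*Q) := by
        nlinarith [sq_nonneg ε, mul_pos hQ hQ]
      have e3 : Q*(P*ν) ≤ Q*(P*(2*ε^2*Q)) := by nlinarith [mul_nonneg hQ.le hP]
      have h4 : ε*(3*ε*P*Q^2) = 3*ε^2*Q*(P*Q) := by ring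
      nlinarith [hε]
  rw [abs_le]
  constructor <;> linarith [h1.1, h1.2, h2.1, h2.2]

/-- Solving a perturbed linear system can be viewed as solving with a spectrally close matrix. -/
theorem stmt5 (d : ℕ) (H : Matrix (Fin d) (Fin d) ℝ) (hH : H.PosDef)
    (b v : Fin d → ℝ) (ε : ℝ) (hε0 : 0 ≤ ε) (hε : ε ≤ 1/80)
    (hv : Real.sqrt (v ⬝ᵥ (H⁻¹ *ᵥ v)) ≤ ε * Real.sqrt (b ⬝ᵥ (H⁻¹ *ᵥ b))) :
    ∃ Δ : Matrix (Fin d) (Fin d) ℝ, Δ.IsSymm ∧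
      (H + Δ).PosDef ∧
      ((H + Δ) - Real.exp (-(20 * ε)) • H).PosSemidef ∧
      (Real.exp (20 * ε) • H - (H + Δ)).PosSemidef ∧
      H⁻¹ *ᵥ (b + v) = (H + Δ)⁻¹ *ᵥ b := by
  classical
  have hApd : (H⁻¹).PosDef := hH.inv
  have hApsd : (H⁻¹).PosSemidef := hApd.posSemidef
  have hAs : (H⁻¹)ᵀ = H⁻¹ := by
    have := hApd.1
    rwa [Matrix.IsHermitian, conjTranspose_eq_transpose_of_trivial] at this
  have hHs : Hᵀ = H := by
    have := hH.1
    rwa [Matrix.IsHermitian, conjTranspose_eq_transpose_of_trivial] at this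
  have hHdet : IsUnit H.det := isUnit_iff_ne_zero.mpr hH.det_pos.ne'
  have hHA : ∀ w : Fin d → ℝ, H *ᵥ (H⁻¹ *ᵥ w) = w := fun w => by
    rw [mulVec_mulVec, Matrix.mul_nonsing_inv _ hHdet, one_mulVec]
  have hν0 : 0 ≤ v ⬝ᵥ H⁻¹ *ᵥ v := by simpa using hApsd.dotProduct_mulVec_nonneg v
  have hβ0 : 0 ≤ b ⬝ᵥ H⁻¹ *ᵥ b := by simpa using hApsd.dotProduct_mulVec_nonneg b
  have hνβ : v ⬝ᵥ H⁻¹ *ᵥ v ≤ ε^2 * (b ⬝ᵥ H⁻¹ *ᵥ b) := by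
    have h := mul_self_le_mul_self (Real.sqrt_nonneg _) hv
    rw [Real.mul_self_sqrt hν0] at h
    have h2 : Real.sqrt (b ⬝ᵥ H⁻¹ *ᵥ b) * Real.sqrt (b ⬝ᵥ H⁻¹ *ᵥ b) = b ⬝ᵥ H⁻¹ *ᵥ b :=
      Real.mul_self_sqrt hβ0
    nlinarith [h, h2]
  by_cases hv0 : v = 0
  · refine ⟨0, by simp [Matrix.IsSymm], by simpa using hH, ?_, ?_, by simp [hv0]⟩
    · have he : Real.exp (-(20*ε)) ≤ 1 := by
        rw [show (1:ℝ) = Real.exp 0 by simp]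
        exact Real.exp_le_exp.mpr (by linarith)
      have : H + 0 - Real.exp (-(20*ε)) • H = (1 - Real.exp (-(20*ε))) • H := by
        rw [add_zero, sub_smul, one_smul]
      rw [this]
      exact aux_psd_smul H hH.posSemidef (by linarith)
    · have he : (1:ℝ) ≤ Real.exp (20*ε) := by
        rw [show (1:ℝ) = Real.exp 0 by simp]
        exact Real.exp_le_exp.mpr (by linarith)
      have : Real.exp (20*ε) • H - (H + 0) = (Real.exp (20*ε) - 1) • H := by
        rw [add_zero, sub_smul, one_smul]
      rw [this]
      exact aux_psd_smul H hH.posSemidef (by linarith)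
  · -- main case
    have hνpos : 0 < v ⬝ᵥ H⁻¹ *ᵥ v := by simpa using hApd.dotProduct_mulVec_pos hv0
    set z : Fin d → ℝ := b + v with hz
    set Q : ℝ := z ⬝ᵥ H⁻¹ *ᵥ z with hQdef
    set c : ℝ := v ⬝ᵥ H⁻¹ *ᵥ z with hcdef
    set ν : ℝ := v ⬝ᵥ H⁻¹ *ᵥ v with hνdef
    have hQ0 : 0 ≤ Q := by rw [hQdef]; simpa using hApsd.dotProduct_mulVec_nonneg z
    have hb_eq : b = z - v := by rw [hz]; abel
    have hβ : b ⬝ᵥ H⁻¹ *ᵥ b = Q - 2*c + ν := by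
      have h1 : z ⬝ᵥ H⁻¹ *ᵥ v = c := aux_symm_swap _ hAs z v
      rw [hb_eq]
      simp only [sub_dotProduct, mulVec_sub, dotProduct_sub]
      rw [h1, hQdef, hcdef, hνdef]
      ring
    have hc2 : c^2 ≤ ν * Q := aux_CS _ hApsd v z
    have hεpos : 0 < ε := by
      rcases hε0.lt_or_eq with h | h
      · exact h
      · exfalso; rw [← h] at hνβ; nlinarith
    have hQpos : 0 < Q := by
      rcases hQ0.lt_or_eq with h | h
      · exact h
      · exfalso
        have hcc : c^2 ≤ 0 := by rw [← h] at hc2; nlinarith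
        have hc0 : c = 0 := by nlinarith [sq_nonneg c]
        rw [hβ, ← h, hc0] at hνβ
        have hε2 : ε^2 ≤ 1/6400 := by nlinarith
        nlinarith [mul_le_mul_of_nonneg_right hε2 hν0]
    have hνQ : ν ≤ 2*ε^2*Q := by
      rw [hβ] at hνβ
      have k1 : ν*Q ≤ ε^2*Q^2 - 2*(ε^2*c*Q) + ε^2*ν*Q := by
        nlinarith [mul_le_mul_of_nonneg_left hνβ hQpos.le]
      have k2 : -(2*(ε^2*c*Q)) ≤ ε*c^2 + ε^3*Q^2 := by
        nlinarith [mul_nonneg hεpos.le (sq_nonneg (c + ε*Q))]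
      have k3 : ε*c^2 ≤ ε*(ν*Q) := mul_le_mul_of_nonneg_left hc2 hεpos.le
      have k5 : ε^2*(1+ε)*Q^2 ≤ (2*ε^2*Q) * (Q*(1 - ε - ε^2)) := by
        nlinarith [mul_nonneg (show (0:ℝ) ≤ 1-3*ε-2*ε^2 by nlinarith)
          (mul_nonneg (sq_nonneg ε) (mul_nonneg hQpos.le hQpos.le))]
      have key : ν * (Q*(1 - ε - ε^2)) ≤ (2*ε^2*Q) * (Q*(1 - ε - ε^2)) := by
        nlinarith [k1, k2, k3, k5]
      have hpos : 0 < Q*(1 - ε - ε^2) := mul_pos hQpos (by nlinarith)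
      exact le_of_mul_le_mul_right key hpos
    set Δ : Matrix (Fin d) (Fin d) ℝ :=
      (c/Q^2) • vecMulVec z z - (1/Q) • (vecMulVec v z + vecMulVec z v) with hΔ
    have hΔs : Δᵀ = Δ := by
      have hvz : (vecMulVec v z)ᵀ = vecMulVec z v := by
        ext i j; simp [vecMulVec_apply, transpose_apply, mul_comm]
      have hzv : (vecMulVec z v)ᵀ = vecMulVec v z := by
        ext i j; simp [vecMulVec_apply, transpose_apply, mul_comm]
      have hzz : (vecMulVec z z)ᵀ = vecMulVec z z := by
        ext i j; simp [vecMulVec_apply, transpose_apply, mul_comm]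
      rw [hΔ, transpose_sub, transpose_smul, transpose_smul, transpose_add, hvz, hzv, hzz,
        add_comm (vecMulVec z v)]
    have hform : ∀ x : Fin d → ℝ,
        x ⬝ᵥ Δ *ᵥ x = (c*(z ⬝ᵥ x)^2 - 2*Q*((v ⬝ᵥ x)*(z ⬝ᵥ x)))/Q^2 := by
      intro x
      rw [hΔ]
      simp only [sub_mulVec, smul_mulVec, add_mulVec, aux_vecMulVec_mulVec,
        dotProduct_sub, dotProduct_smul, dotProduct_add, smul_eq_mul]
      rw [dotProduct_comm x z, dotProduct_comm x v]
      field_simp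
      ring
    have hbound : ∀ x : Fin d → ℝ, |x ⬝ᵥ Δ *ᵥ x| ≤ 5*ε*(x ⬝ᵥ H *ᵥ x) := by
      intro x
      have hP0 : 0 ≤ x ⬝ᵥ H *ᵥ x := by simpa using hH.posSemidef.dotProduct_mulVec_nonneg x
      have hs : (z ⬝ᵥ x)^2 ≤ (x ⬝ᵥ H *ᵥ x) * Q := by
        have h := aux_CS H hH.posSemidef x (H⁻¹ *ᵥ z)
        rw [hHA z] at h
        rw [dotProduct_comm (H⁻¹ *ᵥ z) z] at h
        rw [dotProduct_comm x z] at h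
        rw [← hQdef] at h
        exact h
      have ht : (v ⬝ᵥ x)^2 ≤ (x ⬝ᵥ H *ᵥ x) * ν := by
        have h := aux_CS H hH.posSemidef x (H⁻¹ *ᵥ v)
        rw [hHA v] at h
        rw [dotProduct_comm (H⁻¹ *ᵥ v) v] at h
        rw [dotProduct_comm x v] at h
        rw [← hνdef] at h
        exact h
      have habs := aux_scalar (x ⬝ᵥ H *ᵥ x) Q c (z ⬝ᵥ x) (v ⬝ᵥ x) ν ε hP0 hQpos
        (le_of_lt (by rw [hνdef]; exact hνpos)) hεpos hε hs ht hc2 hνQ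
      rw [hform x, abs_div, abs_of_pos (pow_pos hQpos 2), div_le_iff₀ (pow_pos hQpos 2)]
      calc |c*(z ⬝ᵥ x)^2 - 2*Q*((v ⬝ᵥ x)*(z ⬝ᵥ x))| ≤ 5*ε*(x ⬝ᵥ H *ᵥ x)*Q^2 := habs
        _ = 5*ε*(x ⬝ᵥ H *ᵥ x)*Q^2 := rfl
    have hlo : Real.exp (-(20*ε)) ≤ 1 - 16*ε := by
      have hE := Real.add_one_le_exp (20*ε)
      have hEpos := Real.exp_pos (20*ε)
      have hprod : Real.exp (-(20*ε)) * Real.exp (20*ε) = 1 := by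
        rw [← Real.exp_add]; simp
      have h320 : 320*ε^2 ≤ 4*ε := by nlinarith
      nlinarith [mul_le_mul_of_nonneg_left hE (show (0:ℝ) ≤ 1 - 16*ε by linarith),
        Real.exp_pos (-(20*ε))]
    have hhi : 1 + 16*ε ≤ Real.exp (20*ε) := by
      have hE := Real.add_one_le_exp (20*ε)
      linarith
    have psd1 : ((H + Δ) - Real.exp (-(20*ε)) • H).PosSemidef := by
      refine PosSemidef.of_dotProduct_mulVec_nonneg ?_ (fun x => ?_)
      · rw [Matrix.IsHermitian, conjTranspose_eq_transpose_of_trivial, transpose_sub,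
          transpose_add, transpose_smul, hHs, hΔs]
      · rw [star_trivial]
        simp only [sub_mulVec, add_mulVec, smul_mulVec, dotProduct_sub, dotProduct_add,
          dotProduct_smul, smul_eq_mul]
        have h1 := (abs_le.mp (hbound x)).1
        have hP0 : 0 ≤ x ⬝ᵥ H *ᵥ x := by simpa using hH.posSemidef.dotProduct_mulVec_nonneg x
        have h2 : Real.exp (-(20*ε)) * (x ⬝ᵥ H *ᵥ x) ≤ (1 - 16*ε) * (x ⬝ᵥ H *ᵥ x) :=
          mul_le_mul_of_nonneg_right hlo hP0
        have h3 : 0 ≤ ε * (x ⬝ᵥ H *ᵥ x) := mul_nonneg hεpos.le hP0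
        linarith
    have psd2 : (Real.exp (20*ε) • H - (H + Δ)).PosSemidef := by
      refine PosSemidef.of_dotProduct_mulVec_nonneg ?_ (fun x => ?_)
      · rw [Matrix.IsHermitian, conjTranspose_eq_transpose_of_trivial, transpose_sub,
          transpose_add, transpose_smul, hHs, hΔs]
      · rw [star_trivial]
        simp only [sub_mulVec, add_mulVec, smul_mulVec, dotProduct_sub, dotProduct_add,
          dotProduct_smul, smul_eq_mul]
        have h1 := (abs_le.mp (hbound x)).2
        have hP0 : 0 ≤ x ⬝ᵥ H *ᵥ x := by simpa using hH.posSemidef.dotProduct_mulVec_nonneg x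
        have h2 : (1 + 16*ε) * (x ⬝ᵥ H *ᵥ x) ≤ Real.exp (20*ε) * (x ⬝ᵥ H *ᵥ x) :=
          mul_le_mul_of_nonneg_right hhi hP0
        have h3 : 0 ≤ ε * (x ⬝ᵥ H *ᵥ x) := mul_nonneg hεpos.le hP0
        linarith
    have hpd : (H + Δ).PosDef := by
      have hsplit : H + Δ = Real.exp (-(20*ε)) • H + ((H + Δ) - Real.exp (-(20*ε)) • H) := by
        abel
      rw [hsplit]
      exact (aux_pd_smul H hH (Real.exp_pos _)).add_posSemidef psd1
    have hy : (H + Δ) *ᵥ (H⁻¹ *ᵥ z) = b := by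
      rw [add_mulVec, hHA z, hΔ]
      simp only [sub_mulVec, smul_mulVec, add_mulVec, aux_vecMulVec_mulVec,
        ← hQdef, ← hcdef]
      rw [hb_eq]
      funext i
      simp only [Pi.add_apply, Pi.sub_apply, Pi.smul_apply, smul_eq_mul]
      field_simp
      ring
    have hdet2 : IsUnit (H + Δ).det := isUnit_iff_ne_zero.mpr hpd.det_pos.ne'
    refine ⟨Δ, hΔs, hpd, psd1, psd2, ?_⟩
    rw [← hy, mulVec_mulVec, Matrix.nonsing_inv_mul _ hdet2, one_mulVec]
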